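/- Let d ∈ ℕ and suppose P_{d'} = 1 for every d' > d. Then for all n⁻, n⁰, n⁺ ∈ ℕ^p: k_d(n⁻, n⁰, n⁺) = 1 if n⁰ = 0, and k_d(n⁻, n⁰, n⁺) = 1 − P_d if n⁰ ≠ 0. -/

import Mathlib

/-- Total weight `W(v) = Σ_{i : v_i ≠ 0} w_i` of the axes with at least one available split. -/
noncomputable def bartW (p : ℕ) (w : Fin p → ℝ) (v : Fin p → ℕ) : ℝ :=
  ∑ i ∈ Finset.univ.filter (fun i => v i ≠ 0), w i

/-- The BART sub-correlation function `k_d(n⁻, n⁰, n⁺)`, defined by well-founded recursion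
on `Σ_i (n⁻_i + n⁺_i)`. -/
noncomputable def bartK (p : ℕ) (w : Fin p → ℝ) (P : ℕ → ℝ)
    (d : ℕ) (nm n0 np : Fin p → ℕ) : ℝ :=
  if ∀ i, nm i + n0 i + np i = 0 then 1
  else
    1 - P d * (1 - (1 / bartW p w (fun i => nm i + n0 i + np i)) *
      ∑ i ∈ Finset.univ.filter (fun i => nm i + n0 i + np i ≠ 0),
        (w i / ((nm i + n0 i + np i : ℕ) : ℝ)) *
          ((∑ k ∈ (Finset.range (nm i)).attach,
              bartK p w P (d+1) (Function.update nm i k.1) n0 np) +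
           (∑ k ∈ (Finset.range (np i)).attach,
              bartK p w P (d+1) nm n0 (Function.update np i k.1))))
termination_by ∑ i, (nm i + np i)
decreasing_by
  · have hk : k.1 < nm i := Finset.mem_range.mp k.2
    refine Finset.sum_lt_sum (fun j _ => ?_) ⟨i, Finset.mem_univ i, ?_⟩
    · rcases eq_or_ne j i with rfl | hj
      · simp only [Function.update_self]; omega
      · simp only [Function.update_of_ne hj]; omega
    · simp only [Function.update_self]; omega
  · have hk : k.1 < np i := Finset.mem_range.mp k.2
    refine Finset.sum_lt_sum (fun j _ => ?_) ⟨i, Finset.mem_univ i, ?_⟩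
    · rcases eq_or_ne j i with rfl | hj
      · simp only [Function.update_self]; omega
      · simp only [Function.update_of_ne hj]; omega
    · simp only [Function.update_self]; omega

theorem bartK_n0_zero (p : ℕ) (w : Fin p → ℝ) (hw : ∀ i, 0 < w i) (P : ℕ → ℝ)
    (d : ℕ) (nm np : Fin p → ℕ) : bartK p w P d nm 0 np = 1 := by
  rw [bartK]
  split
  · rfl
  · rename_i h
    have hW : 0 < bartW p w (fun i => nm i + (0 : Fin p → ℕ) i + np i) := by
      push_neg at h
      obtain ⟨i, hi⟩ := h
      refine Finset.sum_pos' (fun j _ => (hw j).le) ⟨i, ?_, hw i⟩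
      simp only [Finset.mem_filter, Finset.mem_univ, true_and]
      exact hi
    have hsum : ∑ i ∈ Finset.univ.filter
          (fun i => nm i + (0 : Fin p → ℕ) i + np i ≠ 0),
        (w i / ((nm i + (0 : Fin p → ℕ) i + np i : ℕ) : ℝ)) *
          ((∑ k ∈ (Finset.range (nm i)).attach,
              bartK p w P (d+1) (Function.update nm i k.1) 0 np) +
           (∑ k ∈ (Finset.range (np i)).attach,
              bartK p w P (d+1) nm 0 (Function.update np i k.1)))
        = bartW p w (fun i => nm i + (0 : Fin p → ℕ) i + np i) := by
      unfold bartW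
      refine Finset.sum_congr rfl (fun i hi => ?_)
      have hi' : nm i + (0 : Fin p → ℕ) i + np i ≠ 0 := by
        simpa using (Finset.mem_filter.mp hi).2
      have h1 : (∑ k ∈ (Finset.range (nm i)).attach,
          bartK p w P (d+1) (Function.update nm i k.1) 0 np) = (nm i : ℝ) := by
        rw [Finset.sum_congr rfl
          (fun k _ => bartK_n0_zero p w hw P (d+1) (Function.update nm i k.1) np)]
        simp
      have h2 : (∑ k ∈ (Finset.range (np i)).attach,
          bartK p w P (d+1) nm 0 (Function.update np i k.1)) = (np i : ℝ) := by
        rw [Finset.sum_congr rfl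
          (fun k _ => bartK_n0_zero p w hw P (d+1) nm (Function.update np i k.1))]
        simp
      rw [h1, h2]
      have hn : ((nm i + (0 : Fin p → ℕ) i + np i : ℕ) : ℝ) ≠ 0 := by
        exact_mod_cast hi'
      have : ((nm i : ℝ) + (np i : ℝ)) = ((nm i + (0 : Fin p → ℕ) i + np i : ℕ) : ℝ) := by
        push_cast; simp
      have hx : ((nm i : ℝ) + (np i : ℝ)) ≠ 0 := by rw [this]; exact hn
      rw [← this, div_mul_cancel₀ _ hx]
    rw [hsum, one_div, inv_mul_cancel₀ hW.ne']
    ring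
termination_by ∑ i, (nm i + np i)
decreasing_by
  · have hk : k.1 < nm i := Finset.mem_range.mp k.2
    refine Finset.sum_lt_sum (fun j _ => ?_) ⟨i, Finset.mem_univ i, ?_⟩
    · rcases eq_or_ne j i with rfl | hj
      · simp only [Function.update_self]; omega
      · simp only [Function.update_of_ne hj]; omega
    · simp only [Function.update_self]; omega
  · have hk : k.1 < np i := Finset.mem_range.mp k.2
    refine Finset.sum_lt_sum (fun j _ => ?_) ⟨i, Finset.mem_univ i, ?_⟩
    · rcases eq_or_ne j i with rfl | hj
      · simp only [Function.update_self]; omega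
      · simp only [Function.update_of_ne hj]; omega
    · simp only [Function.update_self]; omega

theorem bartK_n0_ne (p : ℕ) (w : Fin p → ℝ) (P : ℕ → ℝ)
    (d : ℕ) (hP1 : ∀ d' > d, P d' = 1) (nm n0 np : Fin p → ℕ) (h0 : n0 ≠ 0) :
    bartK p w P d nm n0 np = 1 - P d := by
  rw [bartK]
  split
  · rename_i h
    exact absurd (funext fun i => by have := h i; simp only [Pi.zero_apply]; omega) h0
  · have hzero : ∑ i ∈ Finset.univ.filter (fun i => nm i + n0 i + np i ≠ 0),
        (w i / ((nm i + n0 i + np i : ℕ) : ℝ)) *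
          ((∑ k ∈ (Finset.range (nm i)).attach,
              bartK p w P (d+1) (Function.update nm i k.1) n0 np) +
           (∑ k ∈ (Finset.range (np i)).attach,
              bartK p w P (d+1) nm n0 (Function.update np i k.1))) = 0 := by
      refine Finset.sum_eq_zero (fun i hi => ?_)
      have hP1' : ∀ d' > d + 1, P d' = 1 := fun d' hd' => hP1 d' (by omega)
      have hPd1 : P (d+1) = 1 := hP1 (d+1) (by omega)
      have h1 : (∑ k ∈ (Finset.range (nm i)).attach,
          bartK p w P (d+1) (Function.update nm i k.1) n0 np) = 0 := by
        refine Finset.sum_eq_zero (fun k _ => ?_)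
        rw [bartK_n0_ne p w P (d+1) hP1' (Function.update nm i k.1) n0 np h0, hPd1]
        ring
      have h2 : (∑ k ∈ (Finset.range (np i)).attach,
          bartK p w P (d+1) nm n0 (Function.update np i k.1)) = 0 := by
        refine Finset.sum_eq_zero (fun k _ => ?_)
        rw [bartK_n0_ne p w P (d+1) hP1' nm n0 (Function.update np i k.1) h0, hPd1]
        ring
      rw [h1, h2]; ring
    rw [hzero]
    ring
termination_by ∑ i, (nm i + np i)
decreasing_by
  · have hk : k.1 < nm i := Finset.mem_range.mp k.2
    refine Finset.sum_lt_sum (fun j _ => ?_) ⟨i, Finset.mem_univ i, ?_⟩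
    · rcases eq_or_ne j i with rfl | hj
      · simp only [Function.update_self]; omega
      · simp only [Function.update_of_ne hj]; omega
    · simp only [Function.update_self]; omega
  · have hk : k.1 < np i := Finset.mem_range.mp k.2
    refine Finset.sum_lt_sum (fun j _ => ?_) ⟨i, Finset.mem_univ i, ?_⟩
    · rcases eq_or_ne j i with rfl | hj
      · simp only [Function.update_self]; omega
      · simp only [Function.update_of_ne hj]; omega
    · simp only [Function.update_self]; omega

/-- Property 9 of Theorem 2: if `P_{d'} = 1` for every `d' > d`, then `k_d(n⁻, n⁰, n⁺) = 1`
when `n⁰ = 0` and `k_d(n⁻, n⁰, n⁺) = 1 - P_d` when `n⁰ ≠ 0` (white noise limit). -/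
theorem bartK_white_noise
    (p : ℕ) (hp : 1 ≤ p) (w : Fin p → ℝ) (hw : ∀ i, 0 < w i)
    (P : ℕ → ℝ) (hP : ∀ d, P d ∈ Set.Icc (0 : ℝ) 1)
    (d : ℕ) (hP1 : ∀ d' > d, P d' = 1) (nm n0 np : Fin p → ℕ) :
    (n0 = 0 → bartK p w P d nm n0 np = 1) ∧
    (n0 ≠ 0 → bartK p w P d nm n0 np = 1 - P d) := by
  constructor
  · rintro rfl; exact bartK_n0_zero p w hw P d nm np
  · intro h0; exact bartK_n0_ne p w P d hP1 nm n0 np h0
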